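/- Let Γ be the semidirect product (ℚ³ ⊕ ℚ³) ⋊ SL(3,ℚ) and Λ the subgroup ℤ³ ⊕ ℤ³ of Γ. Then for every g ∈ Γ there exists a finite index subgroup Λ₀ of Λ such that gΛ₀g⁻¹ ⊆ Λ. -/

import Mathlib

open Matrix

/-- The additive group `R³ ⊕ R³`. -/
abbrev VV (R : Type*) := (Fin 3 → R) × (Fin 3 → R)

/-- Transpose, as a map on `SL(3,R)`. -/
def transposeSL {R : Type*} [CommRing R] (A : Matrix.SpecialLinearGroup (Fin 3) R) :
    Matrix.SpecialLinearGroup (Fin 3) R :=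
  ⟨A.val.transpose, by rw [Matrix.det_transpose]; exact A.prop⟩

/-- The group homomorphism `A ↦ (Aᵀ)⁻¹` on `SL(3,R)`. -/
def dualHom {R : Type*} [CommRing R] :
    Matrix.SpecialLinearGroup (Fin 3) R →* Matrix.SpecialLinearGroup (Fin 3) R where
  toFun A := (transposeSL A)⁻¹
  map_one' := by
    have h : transposeSL (1 : Matrix.SpecialLinearGroup (Fin 3) R) = 1 :=
      Subtype.ext (by simp [transposeSL] <;> rfl)
    show (transposeSL 1)⁻¹ = 1
    rw [h, inv_one]
  map_mul' A B := by
    show (transposeSL (A * B))⁻¹ = (transposeSL A)⁻¹ * (transposeSL B)⁻¹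
    have h : transposeSL (A * B) = transposeSL B * transposeSL A :=
      Subtype.ext (by simp [transposeSL, Matrix.transpose_mul] <;> rfl)
    rw [h, _root_.mul_inv_rev]

/-- The multiplicative group structure that `AddAut A` carried in older Mathlib
(`e * f = f.trans e`, `1 = refl`, `e⁻¹ = e.symm`); Mathlib now makes `AddAut A` an additive group. -/
instance addAutGroupOld {A : Type*} [Add A] : Group (AddAut A) where
  mul g h := AddEquiv.trans h g
  one := AddEquiv.refl A
  inv := AddEquiv.symm
  mul_assoc _ _ _ := rfl
  one_mul _ := rfl
  mul_one _ := rfl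
  inv_mul_cancel e := by ext x; exact e.symm_apply_apply x

/-- Linear automorphisms as additive automorphisms, as a group homomorphism. -/
def linToAddAut {R : Type*} [CommRing R] :
    ((Fin 3 → R) ≃ₗ[R] (Fin 3 → R)) →* AddAut (Fin 3 → R) where
  toFun e := e.toAddEquiv
  map_one' := rfl
  map_mul' _ _ := rfl

/-- Pairs of additive automorphisms give additive automorphisms of the product. -/
def addAutProd {R : Type*} [CommRing R] :
    AddAut (Fin 3 → R) × AddAut (Fin 3 → R) →* AddAut (VV R) where
  toFun p := AddEquiv.prodCongr p.1 p.2
  map_one' := rfl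
  map_mul' _ _ := rfl

/-- The action of `SL(3,R)` on `R³ ⊕ R³` given by `A · (x,y) = (Ax, (Aᵀ)⁻¹y)`,
as a homomorphism into additive automorphisms. -/
noncomputable def sl3Act {R : Type*} [CommRing R] :
    Matrix.SpecialLinearGroup (Fin 3) R →* AddAut (VV R) :=
  addAutProd.comp
    (((linToAddAut.comp Matrix.SpecialLinearGroup.toLin')).prod
      ((linToAddAut.comp Matrix.SpecialLinearGroup.toLin').comp dualHom))

/-- Additive automorphisms as multiplicative automorphisms of `Multiplicative`. -/
def addAutToMulAut {A : Type*} [AddGroup A] : AddAut A →* MulAut (Multiplicative A) where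
  toFun e := AddEquiv.toMultiplicative e
  map_one' := rfl
  map_mul' _ _ := rfl

/-- The action of `SL(3,R)` on `Multiplicative (R³ ⊕ R³)`. -/
noncomputable def sl3ActM (R : Type*) [CommRing R] :
    Matrix.SpecialLinearGroup (Fin 3) R →* MulAut (Multiplicative (VV R)) :=
  addAutToMulAut.comp sl3Act

/-- The group `Γ_R = (R³ ⊕ R³) ⋊ SL(3,R)`. -/
abbrev GammaR (R : Type*) [CommRing R] :=
  SemidirectProduct (Multiplicative (VV R)) (Matrix.SpecialLinearGroup (Fin 3) R) (sl3ActM R)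

/-- Coordinatewise integer casting `ℤ³ → ℚ³` as an additive homomorphism. -/
def intCast3 : (Fin 3 → ℤ) →+ (Fin 3 → ℚ) := (Int.castAddHom ℚ).compLeft (Fin 3)

/-- The inclusion `ℤ³ ⊕ ℤ³ → ℚ³ ⊕ ℚ³`. -/
def intVec : VV ℤ →+ VV ℚ := intCast3.prodMap intCast3

/-- The subgroup `Λ = ℤ³ ⊕ ℤ³` of `Γ = (ℚ³ ⊕ ℚ³) ⋊ SL(3,ℚ)`. -/
noncomputable def LambdaSub : Subgroup (GammaR ℚ) :=
  (AddSubgroup.toSubgroup intVec.range).map SemidirectProduct.inl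

/-- The dot product on `R³`. -/
def dotR {R : Type*} [CommRing R] (x y : Fin 3 → R) : R := ∑ i, x i * y i

/-- The 2-cocycle `Ω_α` on `ℚ³ ⊕ ℚ³`. -/
noncomputable def OmegaQ (α : ℝ) (g h : VV ℚ) : Circle :=
  Circle.exp (2 * Real.pi * α * ((dotR g.1 h.2 - dotR g.2 h.1 : ℚ) : ℝ))

/-- The extension `Ω̃_α` of `Ω_α` to `Γ = (ℚ³ ⊕ ℚ³) ⋊ SL(3,ℚ)`. -/
noncomputable def OmegaT (α : ℝ) (g h : GammaR ℚ) : Circle :=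
  OmegaQ α (Multiplicative.toAdd g.left) (sl3Act g.right (Multiplicative.toAdd h.left))



lemma exists_int_eq_of_den_dvd (q : ℚ) {d : ℕ} (h : q.den ∣ d) : ∃ z : ℤ, (z : ℚ) = d * q := by
  obtain ⟨k, hk⟩ := h
  refine ⟨q.num * k, ?_⟩
  have hq : (q.den : ℚ) * q = q.num := Rat.den_mul_eq_num q
  push_cast [hk]
  rw [mul_comm (q.den : ℚ) (k : ℚ), mul_assoc, hq, mul_comm]

noncomputable def psiHom : Multiplicative (VV ℤ) →* GammaR ℚ :=
  SemidirectProduct.inl.comp (AddMonoidHom.toMultiplicative intVec)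

lemma intVec_injective : Function.Injective intVec := by
  intro a b h
  have h1 := congrArg Prod.fst h
  have h2 := congrArg Prod.snd h
  ext i
  · have := congrFun h1 i
    simpa [intVec, intCast3] using this
  · have := congrFun h2 i
    simpa [intVec, intCast3] using this

lemma psiHom_injective : Function.Injective psiHom := by
  intro a b h
  have := congrArg SemidirectProduct.left h
  simpa [psiHom] using intVec_injective (congrArg Multiplicative.toAdd this)

lemma LambdaSub_eq_range : LambdaSub = psiHom.range := by
  ext x
  constructor
  · rintro ⟨y, ⟨w, hw⟩, rfl⟩
    exact ⟨Multiplicative.ofAdd w, congrArg SemidirectProduct.inl (congrArg Multiplicative.ofAdd hw)⟩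
  · rintro ⟨m, rfl⟩
    exact ⟨AddMonoidHom.toMultiplicative intVec m, ⟨Multiplicative.toAdd m, rfl⟩, rfl⟩

lemma mulVec_intCast_mem_range (A : Matrix.SpecialLinearGroup (Fin 3) ℚ) {d : ℕ}
    (hdvd : ∀ i j, (A.val i j).den ∣ d) (w : Fin 3 → ℤ)
    (hw : ∀ i, w i ∈ AddSubgroup.zmultiples (d : ℤ)) :
    Matrix.SpecialLinearGroup.toLin' A (intCast3 w) ∈ intCast3.range := by
  choose k hk using hw
  choose z hz using fun i j => exists_int_eq_of_den_dvd (A.val i j) (hdvd i j)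
  refine ⟨fun i => ∑ j, z i j * k j, ?_⟩
  funext i
  have h1 : intCast3 (fun i => ∑ j, z i j * k j) i = ((∑ j, z i j * k j : ℤ) : ℚ) := rfl
  have h2 : Matrix.SpecialLinearGroup.toLin' A (intCast3 w) i
      = ∑ j, A.val i j * ((w j : ℤ) : ℚ) := by
    rw [Matrix.SpecialLinearGroup.toLin'_apply, Matrix.toLin'_apply]
    simp [Matrix.mulVec, dotProduct, intCast3]
  rw [h1, h2]
  push_cast
  refine Finset.sum_congr rfl fun j _ => ?_
  rw [hz i j, ← hk j]
  push_cast [smul_eq_mul]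
  ring

lemma conj_inl (g : GammaR ℚ) (n : Multiplicative (VV ℚ)) :
    g * SemidirectProduct.inl n * g⁻¹ = SemidirectProduct.inl (sl3ActM ℚ g.right n) := by
  conv_lhs => rw [← SemidirectProduct.inl_left_mul_inr_right g]
  rw [_root_.mul_inv_rev]
  have h := (SemidirectProduct.inl_aut (φ := sl3ActM ℚ) g.right n).symm
  calc SemidirectProduct.inl g.left * SemidirectProduct.inr g.right * SemidirectProduct.inl n *
      ((SemidirectProduct.inr g.right)⁻¹ * (SemidirectProduct.inl g.left)⁻¹)
      = SemidirectProduct.inl g.left * (SemidirectProduct.inr g.right * SemidirectProduct.inl n *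
        (SemidirectProduct.inr g.right)⁻¹) * (SemidirectProduct.inl g.left)⁻¹ := by
        simp only [mul_assoc]
    _ = SemidirectProduct.inl g.left * SemidirectProduct.inl ((sl3ActM ℚ) g.right n) *
        (SemidirectProduct.inl g.left)⁻¹ := by rw [← map_inv, h]
    _ = SemidirectProduct.inl (g.left * (sl3ActM ℚ) g.right n * g.left⁻¹) := by
        rw [← map_inv, ← _root_.map_mul, ← _root_.map_mul]
    _ = SemidirectProduct.inl ((sl3ActM ℚ) g.right n) := by
        rw [mul_comm g.left, mul_inv_cancel_right]

/-- For every `g ∈ Γ = (ℚ³ ⊕ ℚ³) ⋊ SL(3,ℚ)` there exists a finite index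
subgroup `Λ₀` of `Λ = ℤ³ ⊕ ℤ³` such that `gΛ₀g⁻¹ ⊆ Λ`. -/
theorem exists_finiteIndex_subgroup_conj_subset (g : GammaR ℚ) :
    ∃ Λ₀ : Subgroup (GammaR ℚ), Λ₀ ≤ LambdaSub ∧ Λ₀.relIndex LambdaSub ≠ 0 ∧
      ∀ x ∈ Λ₀, g * x * g⁻¹ ∈ LambdaSub := by
  obtain ⟨A, hA⟩ : ∃ A, A = g.right := ⟨_, rfl⟩
  obtain ⟨B, hB⟩ : ∃ B, B = dualHom g.right := ⟨_, rfl⟩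
  obtain ⟨d, hd⟩ : ∃ d : ℕ, d = ∏ p : Fin 3 × Fin 3, ((A.val p.1 p.2).den * (B.val p.1 p.2).den) := ⟨_, rfl⟩
  have hd0 : d ≠ 0 := by
    rw [hd]
    exact Finset.prod_ne_zero_iff.mpr fun p _ =>
      Nat.mul_ne_zero (Rat.den_ne_zero _) (Rat.den_ne_zero _)
  have hdvdA : ∀ i j, (A.val i j).den ∣ d := fun i j => by
    rw [hd]
    exact dvd_trans (Dvd.intro _ rfl) (Finset.dvd_prod_of_mem _ (Finset.mem_univ (i, j)))
  have hdvdB : ∀ i j, (B.val i j).den ∣ d := fun i j => by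
    rw [hd]
    exact dvd_trans (Dvd.intro_left _ rfl) (Finset.dvd_prod_of_mem _ (Finset.mem_univ (i, j)))
  obtain ⟨H₀, hH₀⟩ : ∃ H₀ : AddSubgroup (VV ℤ), H₀ =
    (AddSubgroup.pi Set.univ fun _ => AddSubgroup.zmultiples (d : ℤ)).prod
      (AddSubgroup.pi Set.univ fun _ => AddSubgroup.zmultiples (d : ℤ)) := ⟨_, rfl⟩
  refine ⟨Subgroup.map psiHom (AddSubgroup.toSubgroup H₀), ?_, ?_, ?_⟩
  · rw [LambdaSub_eq_range]
    exact Subgroup.map_le_range _ _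
  · have h := Subgroup.relIndex_comap psiHom
      (H := Subgroup.map psiHom (AddSubgroup.toSubgroup H₀)) (⊤ : Subgroup (Multiplicative (VV ℤ)))
    rw [Subgroup.comap_map_eq_self_of_injective psiHom_injective,
      Subgroup.relIndex_top_right, ← MonoidHom.range_eq_map] at h
    rw [LambdaSub_eq_range, ← h, AddSubgroup.index_toSubgroup, hH₀]
    simp only [AddSubgroup.index_prod, AddSubgroup.index_pi, Int.index_zmultiples,
      Int.natAbs_natCast, Finset.prod_const]
    positivity
  · rintro x ⟨m, hm, rfl⟩
    subst hA; subst hB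
    have hx : psiHom m = SemidirectProduct.inl (AddMonoidHom.toMultiplicative intVec m) := rfl
    rw [hx, conj_inl]
    have hm' : (Multiplicative.toAdd m) ∈ H₀ := hm
    rw [hH₀, AddSubgroup.mem_prod, AddSubgroup.mem_pi, AddSubgroup.mem_pi] at hm'
    obtain ⟨h1, h2⟩ := hm'
    obtain ⟨u1, hu1⟩ := mulVec_intCast_mem_range g.right hdvdA (Multiplicative.toAdd m).1
      (fun i => h1 i (Set.mem_univ i))
    obtain ⟨u2, hu2⟩ := mulVec_intCast_mem_range (dualHom g.right) hdvdB (Multiplicative.toAdd m).2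
      (fun i => h2 i (Set.mem_univ i))
    refine ⟨(sl3ActM ℚ) g.right ((AddMonoidHom.toMultiplicative intVec) m), ⟨(u1, u2), ?_⟩, rfl⟩
    exact Prod.ext hu1 hu2
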